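/- Let G be a locally compact Hausdorff group acting properly on a locally compact Hausdorff space X, let Z ⊆ X be a topological fundamental domain for the action, and let β be a strongly continuous action of G by *-automorphisms on a C*-algebra B. Then the restriction map F ↦ F|_Z is a *-isomorphism from C₀(X×_G B) onto the C*-algebra of continuous functions f: Z → B that vanish at infinity and satisfy f(z) ∈ B^{G_z} for all z ∈ Z. -/

import Mathlib

section Aux
variable {G : Type*} [Group G]
    {B : Type*} [NormedRing B] [StarRing B] [CStarRing B] [NormedAlgebra ℂ B]
    [StarModule ℂ B] [CompleteSpace B]
    [MulSemiringAction G B] [SMulCommClass G ℂ B]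

lemma aux_norm_smul (hstar : ∀ (g : G) (b : B), g • (star b) = star (g • b))
    (g : G) (b : B) : ‖g • b‖ = ‖b‖ := by
  letI : CStarAlgebra B :=
    { ‹NormedRing B›, ‹StarRing B›, ‹CStarRing B›, ‹NormedAlgebra ℂ B›,
      ‹StarModule ℂ B›, ‹CompleteSpace B› with }
  let eqv : B ≃⋆ₐ[ℂ] B :=
    { toFun := fun b => g • b
      invFun := fun b => g⁻¹ • b
      left_inv := inv_smul_smul g
      right_inv := smul_inv_smul g
      map_mul' := smul_mul' g
      map_add' := smul_add g
      map_smul' := fun c x => smul_comm g c x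
      map_star' := fun x => hstar g x }
  exact StarAlgEquiv.norm_map eqv b

lemma aux_joint_cont [TopologicalSpace G]
    (hstar : ∀ (g : G) (b : B), g • (star b) = star (g • b))
    (hcont : ∀ b : B, Continuous fun g : G => g • b) :
    Continuous fun p : G × B => p.1 • p.2 := by
  rw [continuous_iff_continuousAt]
  rintro ⟨g₀, b₀⟩
  have key : Filter.Tendsto (fun p : G × B => p.1 • p.2 - g₀ • b₀) (nhds (g₀, b₀)) (nhds 0) := by
    apply squeeze_zero_norm (a := fun p : G × B => ‖p.2 - b₀‖ + ‖p.1 • b₀ - g₀ • b₀‖)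
    · intro p
      calc ‖p.1 • p.2 - g₀ • b₀‖
          ≤ ‖p.1 • p.2 - p.1 • b₀‖ + ‖p.1 • b₀ - g₀ • b₀‖ := norm_sub_le_norm_sub_add_norm_sub _ _ _
        _ = ‖p.2 - b₀‖ + ‖p.1 • b₀ - g₀ • b₀‖ := by
            rw [← smul_sub, aux_norm_smul hstar]
    · have c1 : Continuous (fun p : G × B => ‖p.2 - b₀‖) :=
        (continuous_snd.sub continuous_const).norm
      have c2 : Continuous (fun p : G × B => ‖p.1 • b₀ - g₀ • b₀‖) :=
        (((hcont b₀).comp continuous_fst).sub continuous_const).norm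
      have h1 : Filter.Tendsto (fun p : G × B => ‖p.2 - b₀‖) (nhds (g₀, b₀)) (nhds 0) := by
        simpa using c1.tendsto (g₀, b₀)
      have h2 : Filter.Tendsto (fun p : G × B => ‖p.1 • b₀ - g₀ • b₀‖) (nhds (g₀, b₀)) (nhds 0) := by
        simpa using c2.tendsto (g₀, b₀)
      simpa using h1.add h2
  have := key.add (tendsto_const_nhds (x := g₀ • b₀))
  simpa [ContinuousAt] using this

end Aux


/-- A continuous action of `G` on `X` is *proper* if the map
`G × X → X × X, (g,x) ↦ (g • x, x)` is proper, i.e. preimages of compact sets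
are compact. -/
def ProperAction (G X : Type*) [SMul G X] [TopologicalSpace G]
    [TopologicalSpace X] : Prop :=
  ∀ K : Set (X × X), IsCompact K →
    IsCompact ((fun p : G × X => (p.1 • p.2, p.2)) ⁻¹' K)

/-- The generalized fixed-point algebra `C₀(X ×_Γ B)`:  bounded continuous
functions `F : X → B` with `F (g • x) = g • F x`, such that the induced
function `‖F(·)‖` on the orbit space vanishes at infinity. -/
def IndAlg (Γ X B : Type*) [Group Γ] [TopologicalSpace X] [MulAction Γ X]
    [SMul Γ B] [TopologicalSpace B] [Norm B] : Set (X → B) :=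
  {F | Continuous F ∧ (∀ (g : Γ) (x : X), F (g • x) = g • F x) ∧
    (∃ C : ℝ, ∀ x : X, ‖F x‖ ≤ C) ∧
    ∀ ε : ℝ, 0 < ε → ∃ K : Set (Quotient (MulAction.orbitRel Γ X)), IsCompact K ∧
      ∀ x : X, Quotient.mk (MulAction.orbitRel Γ X) x ∉ K → ‖F x‖ < ε}

/-- Let `G` be a locally compact Hausdorff group acting properly on a locally
compact Hausdorff space `X`, let `Z ⊆ X` be a topological fundamental domain
for the action (a closed subset such that `z ↦ G • z` is a homeomorphism onto
the orbit space), and let `β` be a strongly continuous action of `G` by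
`*`-automorphisms on a C*-algebra `B`.  Then the restriction map `F ↦ F|_Z`
is a `*`-isomorphism (a bijection; the operations are pointwise) from
`C₀(X ×_G B)` onto the C*-algebra of continuous functions `f : Z → B` that
vanish at infinity and satisfy `f z ∈ B^{G_z}` for all `z ∈ Z`. -/
theorem restriction_to_fundamental_domain_iso
    (G : Type*) [Group G] [TopologicalSpace G] [IsTopologicalGroup G]
    [LocallyCompactSpace G] [T2Space G]
    (X : Type*) [TopologicalSpace X] [LocallyCompactSpace X] [T2Space X]
    [MulAction G X] [ContinuousSMul G X] (hproper : ProperAction G X)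
    (Z : Set X) (hZclosed : IsClosed Z)
    (hZfund : IsHomeomorph fun z : ↥Z =>
      Quotient.mk (MulAction.orbitRel G X) (z : X))
    (B : Type*) [NormedRing B] [StarRing B] [CStarRing B] [NormedAlgebra ℂ B]
    [StarModule ℂ B] [CompleteSpace B]
    [MulSemiringAction G B] [SMulCommClass G ℂ B]
    (hstar : ∀ (g : G) (b : B), g • (star b) = star (g • b))
    (hcont : ∀ b : B, Continuous fun g : G => g • b) :
    Set.BijOn (fun F : X → B => fun z : ↥Z => F (z : X)) (IndAlg G X B)
      {f : ↥Z → B | Continuous f ∧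
        (∀ ε : ℝ, 0 < ε → ∃ K : Set ↥Z, IsCompact K ∧
          ∀ z : ↥Z, z ∉ K → ‖f z‖ < ε) ∧
        ∀ z : ↥Z, ∀ k ∈ MulAction.stabilizer G (z : X), k • f z = f z} := by
  classical
  let e : ↥Z ≃ₜ Quotient (MulAction.orbitRel G X) := hZfund.homeomorph _
  have he : ∀ z : ↥Z, e z = Quotient.mk (MulAction.orbitRel G X) (z : X) :=
    fun z => rfl
  let φ : X → ↥Z := fun x => e.symm (Quotient.mk (MulAction.orbitRel G X) x)
  have hφcont : Continuous φ :=
    e.symm.continuous.comp continuous_quotient_mk'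
  have hmk : ∀ x : X, Quotient.mk (MulAction.orbitRel G X) ((φ x : X))
      = Quotient.mk (MulAction.orbitRel G X) x := by
    intro x
    have := e.apply_symm_apply (Quotient.mk (MulAction.orbitRel G X) x)
    rw [← this]
    exact (he _).symm
  have hφorbit : ∀ x : X, ∃ g : G, g • ((φ x : X)) = x := by
    intro x
    have h := hmk x
    rw [Quotient.eq] at h
    rw [MulAction.orbitRel_apply, MulAction.mem_orbit_iff] at h
    obtain ⟨g, hg⟩ := h
    exact ⟨g⁻¹, by rw [← hg, inv_smul_smul]⟩
  have hφZ : ∀ z : ↥Z, φ (z : X) = z := by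
    intro z
    show e.symm (Quotient.mk (MulAction.orbitRel G X) (z : X)) = z
    rw [← he z, e.symm_apply_apply]
  have hφg : ∀ (g : G) (x : X), φ (g • x) = φ x := by
    intro g x
    show e.symm _ = e.symm _
    congr 1
    exact Quotient.sound (MulAction.orbitRel_apply.mpr (MulAction.mem_orbit x g))
  refine ⟨?_, ?_, ?_⟩
  · -- MapsTo
    rintro F ⟨hFc, hFeq, -, hFvan⟩
    refine ⟨hFc.comp continuous_subtype_val, ?_, ?_⟩
    · intro ε hε
      obtain ⟨K, hKc, hKlt⟩ := hFvan ε hε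
      refine ⟨e.symm '' K, hKc.image e.symm.continuous, ?_⟩
      intro z hz
      apply hKlt
      intro hmem
      exact hz ⟨Quotient.mk (MulAction.orbitRel G X) (z : X), hmem,
        by rw [← he z, e.symm_apply_apply]⟩
    · intro z k hk
      have hkz : k • (z : X) = z := hk
      show k • F (z : X) = F (z : X)
      rw [← hFeq k (z : X), hkz]
  · -- InjOn
    rintro F₁ ⟨-, h₁eq, -, -⟩ F₂ ⟨-, h₂eq, -, -⟩ h
    funext x
    obtain ⟨g, hg⟩ := hφorbit x
    have hz : F₁ ((φ x : X)) = F₂ ((φ x : X)) := congrFun h (φ x)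
    calc F₁ x = F₁ (g • ((φ x : X))) := by rw [hg]
      _ = g • F₁ ((φ x : X)) := h₁eq g _
      _ = g • F₂ ((φ x : X)) := by rw [hz]
      _ = F₂ (g • ((φ x : X))) := (h₂eq g _).symm
      _ = F₂ x := by rw [hg]
  · -- SurjOn
    rintro f ⟨hfc, hfvan, hfstab⟩
    choose σ hσ using hφorbit
    set F : X → B := fun x => σ x • f (φ x) with hFdef
    have hwd : ∀ (x : X) (g : G), g • ((φ x : X)) = x → g • f (φ x) = F x := by
      intro x g hg
      have hk : (g⁻¹ * σ x) • ((φ x : X)) = ((φ x : X)) := by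
        rw [mul_smul, hσ x]
        exact inv_smul_eq_iff.mpr hg.symm
      have hst := hfstab (φ x) (g⁻¹ * σ x) (MulAction.mem_stabilizer_iff.mpr hk)
      calc g • f (φ x) = g • ((g⁻¹ * σ x) • f (φ x)) := by rw [hst]
        _ = (g * (g⁻¹ * σ x)) • f (φ x) := (mul_smul _ _ _).symm
        _ = σ x • f (φ x) := by rw [mul_inv_cancel_left]
    have hrest : ∀ z : ↥Z, F (z : X) = f z := by
      intro z
      have h1 : (1 : G) • ((φ (z : X) : X)) = (z : X) := by rw [one_smul, hφZ z]
      have h2 := hwd (z : X) 1 h1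
      rw [one_smul, hφZ z] at h2
      exact h2.symm
    have hFeq : ∀ (g : G) (x : X), F (g • x) = g • F x := by
      intro g x
      have h := hσ (g • x)
      rw [hφg g x] at h
      have h2 : (g⁻¹ * σ (g • x)) • ((φ x : X)) = x := by
        rw [mul_smul, h]
        exact inv_smul_smul g x
      have h3 := hwd x (g⁻¹ * σ (g • x)) h2
      calc F (g • x) = σ (g • x) • f (φ (g • x)) := rfl
        _ = σ (g • x) • f (φ x) := by rw [hφg]
        _ = (g * (g⁻¹ * σ (g • x))) • f (φ x) := by rw [mul_inv_cancel_left]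
        _ = g • ((g⁻¹ * σ (g • x)) • f (φ x)) := mul_smul _ _ _
        _ = g • F x := by rw [h3]
    have hnorm : ∀ (g : G) (b : B), ‖g • b‖ = ‖b‖ := aux_norm_smul hstar
    have hFnorm : ∀ x : X, ‖F x‖ = ‖f (φ x)‖ := fun x => hnorm _ _
    have hfbdd : ∃ C : ℝ, ∀ z : ↥Z, ‖f z‖ ≤ C := by
      obtain ⟨K, hKc, hKlt⟩ := hfvan 1 one_pos
      obtain ⟨C, hC⟩ := hKc.exists_bound_of_continuousOn hfc.continuousOn
      refine ⟨max C 1, fun z => ?_⟩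
      by_cases hz : z ∈ K
      · exact le_max_of_le_left (hC z hz)
      · exact le_max_of_le_right (hKlt z hz).le
    have hjoint : Continuous fun p : G × B => p.1 • p.2 := aux_joint_cont hstar hcont
    have hFcont : Continuous F := by
      rw [continuous_iff_continuousAt]
      intro x₀
      by_contra hnot
      rw [ContinuousAt, Metric.tendsto_nhds] at hnot
      push_neg at hnot
      obtain ⟨ε, hε, hfreq⟩ := hnot
      simp only [← not_lt] at hfreq
      set A : Set X := {x | ε ≤ dist (F x) (F x₀)} with hAdef
      have hAfreq : ∃ᶠ x in nhds x₀, x ∈ A := hfreq.mono (fun x hx => not_lt.mp hx)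
      have hANeBot : (nhdsWithin x₀ A).NeBot :=
        mem_closure_iff_nhdsWithin_neBot.mp (mem_closure_iff_frequently.mpr hAfreq)
      obtain ⟨V, hVc, hVmem⟩ := exists_compact_mem_nhds x₀
      set l := nhdsWithin x₀ (A ∩ V) with hldef
      have hlle : l ≤ nhds x₀ := nhdsWithin_le_nhds
      have hlNeBot : l.NeBot := by
        have hle : nhdsWithin x₀ A ≤ Filter.principal V :=
          le_trans nhdsWithin_le_nhds (Filter.le_principal_iff.mpr hVmem)
        rw [hldef, nhdsWithin_inter', inf_of_le_left hle]
        exact hANeBot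
      set W : Set X := Subtype.val '' (φ '' V) with hWdef
      have hWc : IsCompact W := (hVc.image hφcont).image continuous_subtype_val
      have hPc : IsCompact ((fun p : G × X => (p.1 • p.2, p.2)) ⁻¹' (V ×ˢ W)) :=
        hproper _ (hVc.prod hWc)
      set QG : Set G := Prod.fst '' ((fun p : G × X => (p.1 • p.2, p.2)) ⁻¹' (V ×ˢ W)) with hQGdef
      have hQGc : IsCompact QG := hPc.image continuous_fst
      have hσmem : ∀ x ∈ V, σ x ∈ QG := by
        intro x hx
        refine ⟨(σ x, ((φ x : X))), ?_, rfl⟩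
        refine Set.mem_preimage.mpr ?_
        constructor
        · show σ x • ((φ x : X)) ∈ V
          rw [hσ x]; exact hx
        · exact ⟨φ x, ⟨x, hx, rfl⟩, rfl⟩
      set m := Filter.map (fun x => (σ x, φ x)) l with hmdef
      haveI hmNeBot : m.NeBot := hlNeBot.map _
      have hlprin : l ≤ Filter.principal (A ∩ V) :=
        Filter.le_principal_iff.mpr self_mem_nhdsWithin
      have hmle : m ≤ Filter.principal (QG ×ˢ (φ '' V)) := by
        refine le_trans (Filter.map_mono hlprin) ?_
        rw [Filter.map_principal, Filter.principal_mono]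
        rintro p ⟨x, ⟨hxA, hxV⟩, rfl⟩
        exact ⟨hσmem x hxV, ⟨x, hxV, rfl⟩⟩
      obtain ⟨⟨g₁, z₁⟩, -, hcl⟩ := (hQGc.prod (hVc.image hφcont)).exists_clusterPt hmle
      have hz₁ : z₁ = φ x₀ := by
        have hsnd : ClusterPt z₁ (Filter.map Prod.snd m) :=
          hcl.map continuousAt_snd Filter.tendsto_map
        have hle : Filter.map Prod.snd m ≤ nhds (φ x₀) := by
          rw [hmdef, Filter.map_map]
          exact ((hφcont.tendsto x₀).mono_left hlle)
        exact eq_of_nhds_neBot (hsnd.mono hle)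
      have hg₁ : g₁ • ((z₁ : X)) = x₀ := by
        have hact : ContinuousAt (fun p : G × ↥Z => p.1 • ((p.2 : X))) (g₁, z₁) :=
          (continuous_fst.smul (continuous_subtype_val.comp continuous_snd)).continuousAt
        have hcl2 : ClusterPt (g₁ • ((z₁ : X)))
            (Filter.map (fun p : G × ↥Z => p.1 • ((p.2 : X))) m) :=
          hcl.map hact Filter.tendsto_map
        have hle : Filter.map (fun p : G × ↥Z => p.1 • ((p.2 : X))) m ≤ nhds x₀ := by
          rw [hmdef, Filter.map_map]
          have hid : ((fun p : G × ↥Z => p.1 • ((p.2 : X))) ∘ fun x => (σ x, φ x)) = id :=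
            funext fun x => hσ x
          rw [hid, Filter.map_id]
          exact hlle
        exact eq_of_nhds_neBot (hcl2.mono hle)
      have hval : g₁ • f z₁ = F x₀ := by
        rw [hz₁] at hg₁ ⊢
        exact hwd x₀ g₁ hg₁
      have hΦ : ContinuousAt (fun p : G × ↥Z => p.1 • f p.2) (g₁, z₁) :=
        (hjoint.comp (continuous_fst.prodMk (hfc.comp continuous_snd))).continuousAt
      have hclF : ClusterPt (F x₀) (Filter.map F l) := by
        have hcl3 := hcl.map hΦ Filter.tendsto_map
        rw [hval] at hcl3
        have hcomp : ((fun p : G × ↥Z => p.1 • f p.2) ∘ fun x => (σ x, φ x)) = F := rfl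
        rwa [hmdef, Filter.map_map, hcomp] at hcl3
      haveI := hclF.neBot
      have h1 : Metric.ball (F x₀) ε ∈ nhds (F x₀) ⊓ Filter.map F l :=
        Filter.mem_inf_of_left (Metric.ball_mem_nhds _ hε)
      have h2 : F '' (A ∩ V) ∈ nhds (F x₀) ⊓ Filter.map F l := by
        refine Filter.mem_inf_of_right ?_
        rw [Filter.mem_map]
        exact Filter.mem_of_superset self_mem_nhdsWithin
          (fun x hx => Set.mem_image_of_mem F hx)
      obtain ⟨y, hball, x, hxA, hxF⟩ := Filter.nonempty_of_mem (Filter.inter_mem h1 h2)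
      rw [← hxF] at hball
      exact absurd (Metric.mem_ball.mp hball) (not_lt.mpr hxA.1)
    refine ⟨F, ⟨hFcont, hFeq, ?_, ?_⟩, funext hrest⟩
    · obtain ⟨C, hC⟩ := hfbdd
      exact ⟨C, fun x => by rw [hFnorm]; exact hC _⟩
    · intro ε hε
      obtain ⟨K, hKc, hKlt⟩ := hfvan ε hε
      refine ⟨e '' K, hKc.image e.continuous, ?_⟩
      intro x hx
      rw [hFnorm]
      apply hKlt
      intro hmem
      exact hx ⟨φ x, hmem, by rw [he (φ x)]; exact hmk x⟩
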